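/- arXiv:1504.06058 — 5 statements merged into one kernel-verified Lean document; each statement's English description precedes it below -/
import Mathlib

section
/- For all x_i, x_j ∈ (0,1) and integer k ≥ 2, (1 − x_j/k)^k − (1 − x_j/(k − x_i))^k ≤ x_i x_j / (k − 1). -/
/-- For `x_i, x_j ∈ (0,1)` and integer `k ≥ 2`,
`(1 − x_j/k)^k − (1 − x_j/(k − x_i))^k ≤ x_i x_j / (k − 1)`. -/
theorem stmt_7 (xi xj : ℝ) (hxi : xi ∈ Set.Ioo (0 : ℝ) 1) (hxj : xj ∈ Set.Ioo (0 : ℝ) 1)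
    (k : ℕ) (hk : 2 ≤ k) :
    (1 - xj / k) ^ k - (1 - xj / (k - xi)) ^ k ≤ xi * xj / (k - 1) := by
  obtain ⟨hxi0, hxi1⟩ := hxi
  obtain ⟨hxj0, hxj1⟩ := hxj
  have hk2 : (2:ℝ) ≤ (k:ℝ) := by exact_mod_cast hk
  set a : ℝ := 1 - xj / k with ha
  set b : ℝ := 1 - xj / (k - xi) with hb
  have hka : (1:ℝ) < (k:ℝ) - xi := by linarith
  have hk0 : (0:ℝ) < (k:ℝ) := by linarith
  have hb0 : 0 ≤ b := by
    have : xj / ((k:ℝ) - xi) ≤ 1 := by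
      rw [div_le_one (by linarith)]; linarith
    simp [hb]; linarith
  have ha1 : a ≤ 1 := by
    have : 0 ≤ xj / (k:ℝ) := div_nonneg (le_of_lt hxj0) (le_of_lt hk0)
    simp [ha]; linarith
  have hba : b ≤ a := by
    have : xj / (k:ℝ) ≤ xj / ((k:ℝ) - xi) := by
      gcongr
      · linarith
    simp [ha, hb]; linarith
  have hb1 : b ≤ 1 := le_trans hba ha1
  have key : a ^ k - b ^ k = (∑ i ∈ Finset.range k, a ^ i * b ^ (k - 1 - i)) * (a - b) :=
    (geom_sum₂_mul a b k).symm
  have hsum : (∑ i ∈ Finset.range k, a ^ i * b ^ (k - 1 - i)) ≤ (k : ℝ) := by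
    calc (∑ i ∈ Finset.range k, a ^ i * b ^ (k - 1 - i))
        ≤ ∑ i ∈ Finset.range k, 1 := by
          apply Finset.sum_le_sum
          intro i _
          have h1 : a ^ i ≤ 1 := pow_le_one₀ (le_trans hb0 hba) ha1
          have h2 : b ^ (k - 1 - i) ≤ 1 := pow_le_one₀ hb0 hb1
          calc a ^ i * b ^ (k - 1 - i) ≤ 1 * 1 := by
                apply mul_le_mul h1 h2 (pow_nonneg hb0 _) zero_le_one
            _ = 1 := by ring
      _ = (k : ℝ) := by simp
  have hab : a - b = xi * xj / ((k:ℝ) * ((k:ℝ) - xi)) := by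
    rw [ha, hb]
    field_simp
    ring
  have hab0 : 0 ≤ a - b := by linarith
  have hsum0 : 0 ≤ (∑ i ∈ Finset.range k, a ^ i * b ^ (k - 1 - i)) := by
    apply Finset.sum_nonneg
    intro i _
    exact mul_nonneg (pow_nonneg (le_trans hb0 hba) _) (pow_nonneg hb0 _)
  calc a ^ k - b ^ k = (∑ i ∈ Finset.range k, a ^ i * b ^ (k - 1 - i)) * (a - b) := key
    _ ≤ (k : ℝ) * (a - b) := by
        apply mul_le_mul_of_nonneg_right hsum hab0
    _ = xi * xj / ((k:ℝ) - xi) := by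
        rw [hab]; field_simp
    _ ≤ xi * xj / ((k:ℝ) - 1) := by
        gcongr
        all_goals first | positivity | linarith [mul_pos hxi0 hxj0]
end

section
/- For x_i, x_j ∈ (0,1) and integer k ≥ 2, define z_{ii} = 1 − (1 − x_i/k)^k and z_{ij} = 1 − (1 − x_i/k)^k − (1 − x_j/k)^k + (1 − x_i/k − x_j/k)^k. Then z_{ij}/z_{ii} ≥ ((k−2)/(k−1) − 1/e) x_j. -/
open Finset Real

/-- Key algebraic inequality: `(1-b)^k - (1-a-b)^k ≤ (1-b)^(k-1) * (1 - (1-a)^k)`. -/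
lemma stmt_9_keyA (a b : ℝ) (ha : 0 ≤ a) (hb : 0 ≤ b) (hab : a + b ≤ 1) (k : ℕ) :
    (1-b)^k - (1-a-b)^k ≤ (1-b)^(k-1) * (1 - (1-a)^k) := by
  have hb1 : b ≤ 1 := by linarith
  have h1 := geom_sum₂_mul (1-b) (1-a-b) k
  have e1 : (1-b) - (1-a-b) = a := by ring
  rw [e1] at h1
  have h2 := geom_sum₂_mul (1:ℝ) (1-a) k
  simp only [one_pow, one_mul] at h2
  have e2 : (1:ℝ) - (1-a) = a := by ring
  rw [e2] at h2
  rw [← h1, ← h2]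
  have hsum : (∑ i ∈ Finset.range k, (1-b)^i * (1-a-b)^(k-1-i))
      ≤ (1-b)^(k-1) * ∑ i ∈ Finset.range k, (1-a)^(k-1-i) := by
    rw [Finset.mul_sum]
    apply Finset.sum_le_sum
    intro i hi
    have hik : i ≤ k - 1 := by
      have := Finset.mem_range.mp hi; omega
    have hkey : (1-a-b) ≤ (1-b)*(1-a) := by nlinarith
    have h0ab : (0:ℝ) ≤ 1-a-b := by linarith
    have hp : (1-a-b)^(k-1-i) ≤ ((1-b)*(1-a))^(k-1-i) :=
      pow_le_pow_left₀ h0ab hkey _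
    calc (1-b)^i * (1-a-b)^(k-1-i)
        ≤ (1-b)^i * ((1-b)*(1-a))^(k-1-i) := by
          apply mul_le_mul_of_nonneg_left hp (pow_nonneg (by linarith) i)
      _ = (1-b)^(i + (k-1-i)) * (1-a)^(k-1-i) := by
          rw [mul_pow, pow_add]; ring
      _ = (1-b)^(k-1) * (1-a)^(k-1-i) := by
          congr 1
          congr 1
          omega
  calc (∑ i ∈ Finset.range k, (1-b)^i * (1-a-b)^(k-1-i)) * a
      ≤ ((1-b)^(k-1) * ∑ i ∈ Finset.range k, (1-a)^(k-1-i)) * a :=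
        mul_le_mul_of_nonneg_right hsum ha
    _ = (1-b)^(k-1) * ((∑ i ∈ Finset.range k, (1-a)^(k-1-i)) * a) := by ring

/-- With `z_{ii} = 1 − (1 − x_i/k)^k` and
`z_{ij} = 1 − (1 − x_i/k)^k − (1 − x_j/k)^k + (1 − x_i/k − x_j/k)^k`, for
`x_i, x_j ∈ (0,1)` and `k ≥ 2` one has `z_{ij}/z_{ii} ≥ ((k−2)/(k−1) − 1/e) x_j`. -/
theorem stmt_9 (xi xj : ℝ) (hxi : xi ∈ Set.Ioo (0 : ℝ) 1) (hxj : xj ∈ Set.Ioo (0 : ℝ) 1)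
    (k : ℕ) (hk : 2 ≤ k) :
    (1 - (1 - xi / k) ^ k - (1 - xj / k) ^ k + (1 - xi / k - xj / k) ^ k) /
        (1 - (1 - xi / k) ^ k) ≥
      (((k : ℝ) - 2) / ((k : ℝ) - 1) - 1 / Real.exp 1) * xj := by
  obtain ⟨hxi0, hxi1⟩ := hxi
  obtain ⟨hxj0, hxj1⟩ := hxj
  have hK2 : (2:ℝ) ≤ (k:ℝ) := by exact_mod_cast hk
  set K : ℝ := (k:ℝ) with hKdef
  have hK0 : (0:ℝ) < K := by linarith
  set a : ℝ := xi / K with hadef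
  set b : ℝ := xj / K with hbdef
  have hinvK : 1/K ≤ 1/2 := by
    apply one_div_le_one_div_of_le <;> linarith
  have hinvK0 : 0 < 1/K := by positivity
  have ha0 : 0 < a := div_pos hxi0 hK0
  have ha1 : a < 1/K := by
    rw [hadef, div_lt_div_iff₀ hK0 hK0]; nlinarith
  have hb0 : 0 < b := div_pos hxj0 hK0
  have hb1 : b < 1/K := by
    rw [hbdef, div_lt_div_iff₀ hK0 hK0]; nlinarith
  have hab : a + b ≤ 1 := by linarith
  -- positivity of z_ii
  have hzii : 0 < 1 - (1-a)^k := by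
    have : (1-a)^k < 1 := by
      apply pow_lt_one₀ (by linarith) (by linarith)
      omega
    linarith
  -- Claim A
  have hA := stmt_9_keyA a b (le_of_lt ha0) (le_of_lt hb0) hab k
  -- step: ratio ≥ 1 - (1-b)^(k-1)
  have h4 : 1 - (1-b)^(k-1) ≤
      (1 - (1-a)^k - (1-b)^k + (1-a-b)^k) / (1 - (1-a)^k) := by
    rw [le_div_iff₀ hzii]
    nlinarith
  -- step: 1 - (1-b)^(k-1) ≥ xj * (1 - (1-1/K)^(k-1)) via geometric sums
  have h5 : xj * (1 - (1-1/K)^(k-1)) ≤ 1 - (1-b)^(k-1) := by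
    set m : ℕ := k - 1 with hmdef
    have g1 := geom_sum₂_mul (1:ℝ) (1-b) m
    simp only [one_pow, one_mul] at g1
    have e1 : (1:ℝ) - (1-b) = b := by ring
    rw [e1] at g1
    have g2 := geom_sum₂_mul (1:ℝ) (1-(1/K)) m
    simp only [one_pow, one_mul] at g2
    have e2 : (1:ℝ) - (1-(1/K)) = 1/K := by ring
    rw [e2] at g2
    rw [← g1, ← g2]
    have hsum : (∑ i ∈ Finset.range m, (1-(1/K))^(m-1-i))
        ≤ ∑ i ∈ Finset.range m, (1-b)^(m-1-i) := by
      apply Finset.sum_le_sum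
      intro i _
      exact pow_le_pow_left₀ (by linarith) (by linarith) _
    calc xj * ((∑ i ∈ Finset.range m, (1-(1/K))^(m-1-i)) * (1/K))
        = b * (∑ i ∈ Finset.range m, (1-(1/K))^(m-1-i)) := by
          rw [hbdef]; ring
      _ ≤ b * (∑ i ∈ Finset.range m, (1-b)^(m-1-i)) := by
          apply mul_le_mul_of_nonneg_left hsum (le_of_lt hb0)
      _ = (∑ i ∈ Finset.range m, (1-b)^(m-1-i)) * b := by ring
  -- Claim C: (1-1/K)^(k-1) ≤ 1/e + 1/(K-1)
  have hC : (1-1/K)^(k-1) ≤ 1/Real.exp 1 + 1/(K-1) := by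
    have hmcast : ((k-1:ℕ):ℝ) = K - 1 := by
      rw [Nat.cast_sub (by omega)]; simp [hKdef]
    have hc1 : (1-1/K)^(k-1) ≤ (Real.exp (-(1/K)))^(k-1) := by
      apply pow_le_pow_left₀ (by linarith)
      have := Real.add_one_le_exp (-(1/K))
      linarith
    have hc2 : (Real.exp (-(1/K)))^(k-1) = Real.exp (((k-1:ℕ):ℝ) * (-(1/K))) :=
      (Real.exp_nat_mul _ _).symm
    have hc3 : ((k-1:ℕ):ℝ) * (-(1/K)) = -1 + 1/K := by
      rw [hmcast]; field_simp; ring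
    have hc4 : Real.exp (-1 + 1/K) = Real.exp (-1) * Real.exp (1/K) :=
      Real.exp_add _ _
    have hE1 : 1 ≤ Real.exp (1/K) := Real.one_le_exp (by positivity)
    have hEK : Real.exp (1/K) * (1 - 1/K) ≤ 1 := by
      have h1 : 1 - 1/K ≤ Real.exp (-(1/K)) := by
        have := Real.add_one_le_exp (-(1/K)); linarith
      have h2 : Real.exp (1/K) * Real.exp (-(1/K)) = 1 := by
        rw [← Real.exp_add]; simp
      nlinarith [Real.exp_pos (1/K)]
    have hexpinv : Real.exp (-1) = 1/Real.exp 1 := by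
      rw [Real.exp_neg]; ring
    have hee : 1 ≤ Real.exp 1 := Real.one_le_exp (by norm_num)
    have hKm1 : (0:ℝ) < K - 1 := by linarith
    -- exp(-1) * exp(1/K) ≤ 1/e + 1/(K-1)
    have hfinal : Real.exp (-1) * Real.exp (1/K) ≤ 1/Real.exp 1 + 1/(K-1) := by
      rw [hexpinv]
      have hEK' : Real.exp (1/K) * (K - 1) ≤ K := by
        have h3 := mul_le_mul_of_nonneg_left hEK (le_of_lt hK0)
        have h4 : K * (Real.exp (1/K) * (1 - 1/K)) = Real.exp (1/K) * (K - 1) := by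
          field_simp
        rw [h4] at h3; linarith
      have hE2 : Real.exp (1/K) - 1 ≤ 1/(K-1) := by
        rw [le_div_iff₀ hKm1]
        have hexpand2 : (Real.exp (1/K) - 1) * (K-1)
            = Real.exp (1/K) * (K - 1) - (K-1) := by ring
        rw [hexpand2]; linarith [hEK']
      have hepos : 0 < Real.exp 1 := Real.exp_pos 1
      have h1e : 1/Real.exp 1 ≤ 1 := by
        rw [div_le_one hepos]; exact hee
      have key : (1/Real.exp 1) * (Real.exp (1/K) - 1) ≤ Real.exp (1/K) - 1 :=
        mul_le_of_le_one_left (by linarith) h1e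
      have hexpand : (1/Real.exp 1) * Real.exp (1/K)
          = (1/Real.exp 1) * (Real.exp (1/K) - 1) + 1/Real.exp 1 := by ring
      linarith [hexpand.le, hexpand.ge]
    calc (1-1/K)^(k-1) ≤ (Real.exp (-(1/K)))^(k-1) := hc1
      _ = Real.exp (-1 + 1/K) := by rw [hc2, hc3]
      _ = Real.exp (-1) * Real.exp (1/K) := hc4
      _ ≤ 1/Real.exp 1 + 1/(K-1) := hfinal
  have h6 : (K-2)/(K-1) - 1/Real.exp 1 ≤ 1 - (1-1/K)^(k-1) := by
    have hKm1 : (0:ℝ) < K - 1 := by linarith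
    have heq : (K-2)/(K-1) = 1 - 1/(K-1) := by field_simp; ring
    rw [heq]; linarith
  have h7 : ((K-2)/(K-1) - 1/Real.exp 1) * xj ≤ xj * (1 - (1-1/K)^(k-1)) := by
    rw [mul_comm]
    exact mul_le_mul_of_nonneg_left h6 (le_of_lt hxj0)
  linarith
end

section
/- Suppose k resources are each placed independently, with resource placement distribution assigning probability x_t/k to target t where ∑_t x_t ≤ k (sampling with replacement, i.e., a sequence of exactly k i.i.d. draws). Suppose instead one continues i.i.d. draws until exactly k distinct targets have appeared (sampling without replacement in the coupled sense). Then for every target i, the probability y_{ii} that i appears in the without-replacement process is at least the probability z_{ii} = 1 − (1 − x_i/k)^k that i appears among the first k draws. -/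
open MeasureTheory

/-- Coupling bound: drawing i.i.d. from the distribution `(x_1/k,…,x_n/k)` until `k`
distinct targets appear, the probability `y_{ii}` that target `i` appears is at
least `z_{ii} = 1 − (1 − x_i/k)^k`, the probability it appears among the first `k`
draws. The i.i.d. measure `μ` on infinite draw sequences is specified by its
cylinder probabilities. -/
theorem stmt_10 (n k : ℕ) (hk : 1 ≤ k) (x : Fin n → ℝ) (hx : ∀ t, 0 ≤ x t)
    (hsum : ∑ t, x t = (k : ℝ))
    (μ : Measure (ℕ → Fin n)) [IsProbabilityMeasure μ]
    (hcyl : ∀ (t : ℕ) (g : ℕ → Fin n),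
      μ {ω | ∀ s < t, ω s = g s} =
        ∏ s ∈ Finset.range t, ENNReal.ofReal (x (g s) / k))
    (i : Fin n) :
    (μ {ω | ∃ t : ℕ, ω t = i ∧ (Finset.image ω (Finset.range (t + 1))).card ≤ k}).toReal ≥
      1 - (1 - x i / k) ^ k := by
  have hk0 : (0:ℝ) < k := by exact_mod_cast hk
  have hxik : x i ≤ k := by
    calc x i ≤ ∑ t, x t := Finset.single_le_sum (fun t _ => hx t) (Finset.mem_univ i)
    _ = k := hsum
  have h1 : (0:ℝ) ≤ 1 - x i / k := by
    have : x i / k ≤ 1 := (div_le_one hk0).mpr hxik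
    linarith
  set r : ℝ := (1 - x i / k) ^ k with hr
  have hr0 : 0 ≤ r := pow_nonneg h1 k
  set E : Set (ℕ → Fin n) :=
    {ω | ∃ t : ℕ, ω t = i ∧ (Finset.image ω (Finset.range (t + 1))).card ≤ k} with hE
  set A : Set (ℕ → Fin n) := {ω | ∀ s < k, ω s ≠ i} with hAdef
  -- extension of a finite function
  set g : (Fin k → Fin n) → ℕ → Fin n :=
    fun f s => if h : s < k then f ⟨s, h⟩ else i with hg
  set C : (Fin k → Fin n) → Set (ℕ → Fin n) :=
    fun f => {ω | ∀ s < k, ω s = g f s} with hC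
  set S : Finset (Fin k → Fin n) :=
    Fintype.piFinset (fun _ : Fin k => Finset.univ.erase i) with hS
  have hmemS : ∀ f, f ∈ S ↔ ∀ s, f s ≠ i := by
    intro f
    simp [hS, Fintype.mem_piFinset, Finset.mem_erase]
  -- A is the disjoint union of cylinders
  have hAeq : A = ⋃ f ∈ S, C f := by
    ext ω
    constructor
    · intro hω
      refine Set.mem_biUnion ((hmemS (fun s : Fin k => ω s)).mpr ?_) ?_
      · intro s; exact hω s s.isLt
      · intro s hs
        simp [hC, hg, hs]
    · intro hω
      rcases Set.mem_iUnion₂.mp hω with ⟨f, hf, hωf⟩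
      intro s hs
      have := hωf s hs
      rw [this]
      simp only [hg, dif_pos hs]
      exact (hmemS f).mp hf _
  have hCmeas : ∀ f, MeasurableSet (C f) := by
    intro f
    have : C f = ⋂ s ∈ Finset.range k, (fun ω : ℕ → Fin n => ω s) ⁻¹' {g f s} := by
      ext ω; simp [hC]
    rw [this]
    exact MeasurableSet.biInter (Set.to_countable _)
      (fun s _ => (measurable_pi_apply s) (measurableSet_singleton _))
  have hdisj : (S : Set (Fin k → Fin n)).PairwiseDisjoint C := by
    intro f hf f' hf' hne
    obtain ⟨s, hs⟩ : ∃ s : Fin k, f s ≠ f' s := by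
      by_contra h
      push_neg at h
      exact hne (funext h)
    refine Set.disjoint_left.mpr ?_
    intro ω hω hω'
    have h1 := hω s s.isLt
    have h2 := hω' s s.isLt
    apply hs
    have e1 : g f s.val = f s := by simp [hg, s.isLt]
    have e2 : g f' s.val = f' s := by simp [hg, s.isLt]
    rw [← e1, ← e2, ← h1, ← h2]
  have hμC : ∀ f, μ (C f) = ∏ s : Fin k, ENNReal.ofReal (x (f s) / k) := by
    intro f
    rw [hC]
    simp only []
    rw [hcyl k (g f), ← Fin.prod_univ_eq_prod_range]
    exact Finset.prod_congr rfl (fun s _ => by simp [hg, s.isLt])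
  have hμA : μ A = ENNReal.ofReal r := by
    rw [hAeq, measure_biUnion_finset hdisj (fun f _ => hCmeas f)]
    have : ∑ f ∈ S, μ (C f)
        = ∑ f ∈ S, ∏ s : Fin k, ENNReal.ofReal (x (f s) / k) :=
      Finset.sum_congr rfl (fun f _ => hμC f)
    rw [this, hS, ← Finset.prod_univ_sum (fun _ : Fin k => Finset.univ.erase i)
      (fun (_ : Fin k) j => ENNReal.ofReal (x j / (k:ℝ)))]
    have hsum' : ∑ j ∈ Finset.univ.erase i, ENNReal.ofReal (x j / k)
        = ENNReal.ofReal (1 - x i / k) := by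
      rw [← ENNReal.ofReal_sum_of_nonneg (fun j _ => div_nonneg (hx j) hk0.le)]
      congr 1
      rw [← Finset.sum_div]
      have : ∑ j ∈ Finset.univ.erase i, x j = (k : ℝ) - x i := by
        have h := Finset.add_sum_erase Finset.univ x (Finset.mem_univ i)
        rw [hsum] at h
        linarith
      rw [this]
      field_simp
    rw [Finset.prod_congr rfl (fun s _ => hsum'), Finset.prod_const,
      Finset.card_univ, Fintype.card_fin, hr, ← ENNReal.ofReal_pow h1]
  -- union covers everything
  have hcover : (Set.univ : Set (ℕ → Fin n)) ⊆ E ∪ A := by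
    intro ω _
    by_cases hA : ω ∈ A
    · exact Or.inr hA
    · left
      simp only [hAdef, Set.mem_setOf_eq] at hA
      push_neg at hA
      obtain ⟨t, htk, hti⟩ := hA
      refine ⟨t, hti, ?_⟩
      calc (Finset.image ω (Finset.range (t + 1))).card
          ≤ (Finset.range (t + 1)).card := Finset.card_image_le
        _ = t + 1 := Finset.card_range _
        _ ≤ k := htk
  have key : (1 : ENNReal) ≤ μ E + ENNReal.ofReal r := by
    calc (1 : ENNReal) = μ Set.univ := (measure_univ).symm
      _ ≤ μ (E ∪ A) := measure_mono hcover
      _ ≤ μ E + μ A := measure_union_le _ _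
      _ = μ E + ENNReal.ofReal r := by rw [hμA]
  have hEfin : μ E ≠ ⊤ := measure_ne_top μ E
  have hfin : μ E + ENNReal.ofReal r ≠ ⊤ := by
    exact ENNReal.add_ne_top.mpr ⟨hEfin, ENNReal.ofReal_ne_top⟩
  have := ENNReal.toReal_mono hfin key
  rw [ENNReal.toReal_one, ENNReal.toReal_add hEfin ENNReal.ofReal_ne_top,
    ENNReal.toReal_ofReal hr0] at this
  linarith
end

section
/- Let X ∈ Conv({v vᵀ : v ∈ {0,1}^n}) satisfy tr(X) = k and ∑_{i,j} X_{ij} = k². Then X ∈ Conv({v vᵀ : v ∈ {0,1}^n, ∑_i v_i = k}). That is, the polytope P(n,k) equals the intersection of the full correlation polytope P(n) with the hyperplanes tr(X) = k and sum(X) = k². -/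
open Matrix Finset

/-- If `X` lies in the correlation polytope `Conv({v vᵀ : v ∈ {0,1}^n})` and
satisfies `tr(X) = k` and `∑_{i,j} X_{ij} = k²`, then `X` lies in
`P(n,k) = Conv({v vᵀ : v ∈ {0,1}^n, ∑ v_i = k})`. -/
theorem stmt_14 (n k : ℕ) (X : Matrix (Fin n) (Fin n) ℝ)
    (hX : X ∈ convexHull ℝ {M : Matrix (Fin n) (Fin n) ℝ |
      ∃ v : Fin n → ℝ, (∀ i, v i = 0 ∨ v i = 1) ∧ M = Matrix.vecMulVec v v})
    (htr : X.trace = (k : ℝ))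
    (hsum : (∑ i, ∑ j, X i j) = (k : ℝ) ^ 2) :
    X ∈ convexHull ℝ {M : Matrix (Fin n) (Fin n) ℝ |
      ∃ v : Fin n → ℝ, (∀ i, v i = 0 ∨ v i = 1) ∧ (∑ i, v i = (k : ℝ)) ∧
        M = Matrix.vecMulVec v v} := by
  rw [_root_.convexHull_eq] at hX
  obtain ⟨ι, t, w, z, hw0, hw1, hz, hXeq⟩ := hX
  have hv : ∀ i ∈ t, ∃ v : Fin n → ℝ, (∀ j, v j = 0 ∨ v j = 1) ∧ z i = Matrix.vecMulVec v v := by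
    intro i hi; obtain ⟨v, h1, h2⟩ := hz i hi; exact ⟨v, h1, h2⟩
  choose! v hv1 hv2 using hv
  set s : ι → ℝ := fun i => ∑ j, v i j with hs
  have hXsum : X = ∑ i ∈ t, w i • z i := by
    rw [← hXeq, Finset.centerMass_eq_of_sum_1 _ _ hw1]
  -- trace of each atom
  have htrz : ∀ i ∈ t, (z i).trace = s i := by
    intro i hi
    rw [hv2 i hi, Matrix.trace]
    simp only [Matrix.diag_apply, Matrix.vecMulVec_apply, hs]
    apply Finset.sum_congr rfl
    intro j _
    rcases hv1 i hi j with h | h <;> rw [h] <;> ring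
  have hsumz : ∀ i ∈ t, (∑ a, ∑ b, z i a b) = s i ^ 2 := by
    intro i hi
    rw [hv2 i hi]
    simp only [Matrix.vecMulVec_apply, hs, ← Finset.sum_mul, ← Finset.mul_sum]
    ring
  -- linear constraints
  have h1 : ∑ i ∈ t, w i * s i = (k : ℝ) := by
    rw [← htr, hXsum, Matrix.trace_sum]
    apply Finset.sum_congr rfl
    intro i hi
    rw [Matrix.trace_smul, htrz i hi, smul_eq_mul]
  have h2 : ∑ i ∈ t, w i * s i ^ 2 = (k : ℝ) ^ 2 := by
    rw [← hsum, hXsum]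
    calc ∑ i ∈ t, w i * s i ^ 2
        = ∑ i ∈ t, w i * ∑ a, ∑ b, z i a b :=
          Finset.sum_congr rfl (fun i hi => by rw [hsumz i hi])
      _ = ∑ a, ∑ b, ∑ i ∈ t, w i * z i a b := by
          simp_rw [Finset.mul_sum]
          rw [Finset.sum_comm]
          exact Finset.sum_congr rfl fun a _ => Finset.sum_comm
      _ = ∑ a, ∑ b, (∑ i ∈ t, w i • z i) a b := by
          simp [Matrix.sum_apply]
  have hvar : ∑ i ∈ t, w i * (s i - k) ^ 2 = 0 := by
    have : ∀ i ∈ t, w i * (s i - k) ^ 2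
        = w i * s i ^ 2 - 2 * (k : ℝ) * (w i * s i) + (k : ℝ) ^ 2 * w i := by
      intro i _; ring
    rw [Finset.sum_congr rfl this, Finset.sum_add_distrib, Finset.sum_sub_distrib,
      ← Finset.mul_sum, ← Finset.mul_sum, h1, h2, hw1]
    ring
  have hk : ∀ i ∈ t, w i ≠ 0 → s i = (k : ℝ) := by
    intro i hi hwi
    have hnn : ∀ i ∈ t, 0 ≤ w i * (s i - k) ^ 2 := fun i hi =>
      mul_nonneg (hw0 i hi) (sq_nonneg _)
    have := (Finset.sum_eq_zero_iff_of_nonneg hnn).mp hvar i hi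
    have h2 : (s i - k) ^ 2 = 0 := by
      rcases mul_eq_zero.mp this with h | h
      · exact absurd h hwi
      · exact h
    have := pow_eq_zero_iff (n := 2) (by norm_num) |>.mp h2
    linarith
  -- restrict to support
  set t' := t.filter (fun i => w i ≠ 0) with ht'
  have hw1' : ∑ i ∈ t', w i = 1 := by
    rw [← hw1]
    exact Finset.sum_filter_ne_zero t
  apply (_root_.convexHull_eq _).ge
  refine ⟨ι, t', w, z, fun i hi => hw0 i (Finset.mem_filter.mp hi).1, hw1', ?_, ?_⟩
  · intro i hi
    obtain ⟨hit, hwi⟩ := Finset.mem_filter.mp hi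
    exact ⟨v i, hv1 i hit, hk i hit hwi, hv2 i hit⟩
  · rw [Finset.centerMass_eq_of_sum_1 _ _ hw1', ← hXeq,
      Finset.centerMass_eq_of_sum_1 _ _ hw1]
    apply Finset.sum_subset (Finset.filter_subset _ _)
    intro i hit hni
    have : w i = 0 := by
      by_contra h
      exact hni (Finset.mem_filter.mpr ⟨hit, h⟩)
    simp [this]
end

section
/- Comb Sampling on n targets with marginal vector x ∈ [0,1]^n with ∑_i x_i = k produces a mixed strategy whose support contains at most n + 1 distinct pure strategies. -/
open Finset

private lemma comb_key (a b h h' : ℝ) (t : ℕ)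
    (hh : 0 ≤ h) (hh1 : h < 1) (hh' : 0 ≤ h') (hh'1 : h' < 1)
    (hfa : Int.fract a ≤ h ↔ Int.fract a ≤ h')
    (hfb : Int.fract b ≤ h ↔ Int.fract b ≤ h')
    (h1 : a ≤ t + h) (h2 : (t : ℝ) + h < b) :
    a ≤ t + h' ∧ (t : ℝ) + h' < b := by
  constructor
  · rcases le_or_gt a t with hc | hc
    · linarith
    · have hfl : ⌊a⌋ = (t : ℤ) := by
        rw [Int.floor_eq_iff]
        constructor <;> push_cast <;> linarith
      have hfr : Int.fract a = a - t := by
        rw [Int.fract, hfl]; push_cast; ring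
      have := hfa.mp (by rw [hfr]; linarith)
      rw [hfr] at this; linarith
  · rcases le_or_gt ((t : ℝ) + 1) b with hc | hc
    · linarith
    · have hfl : ⌊b⌋ = (t : ℤ) := by
        rw [Int.floor_eq_iff]
        constructor <;> push_cast <;> linarith
      have hfr : Int.fract b = b - t := by
        rw [Int.fract, hfl]; push_cast; ring
      have hn : ¬ (Int.fract b ≤ h') := fun hle => by
        have := hfb.mpr hle; rw [hfr] at this; linarith
      rw [hfr] at hn; push_neg at hn; linarith

/-- Comb Sampling: the targets are laid out contiguously (target `i` occupying the
interval `[∑_{j<i} x_j, ∑_{j≤i} x_j)` of total length `k`, viewed as `k` unit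
buckets), and for height `h ∈ [0,1)` the sampled pure strategy is the set of
targets whose segment meets height `h` in one of the `k` buckets. The resulting
mixed strategy has at most `n + 1` distinct pure strategies in its support. -/
theorem stmt_18 (n k : ℕ) (x : Fin n → ℝ) (hx0 : ∀ i, 0 ≤ x i) (hx1 : ∀ i, x i ≤ 1)
    (hsum : ∑ i, x i = (k : ℝ)) :
    {S : Set (Fin n) | ∃ h ∈ Set.Ico (0 : ℝ) 1,
        S = {i : Fin n | ∃ t : ℕ, t < k ∧
          (t : ℝ) + h ∈ Set.Ico (∑ j ∈ Finset.univ.filter (· < i), x j)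
            (∑ j ∈ Finset.univ.filter (· ≤ i), x j)}}.Finite ∧
    {S : Set (Fin n) | ∃ h ∈ Set.Ico (0 : ℝ) 1,
        S = {i : Fin n | ∃ t : ℕ, t < k ∧
          (t : ℝ) + h ∈ Set.Ico (∑ j ∈ Finset.univ.filter (· < i), x j)
            (∑ j ∈ Finset.univ.filter (· ≤ i), x j)}}.ncard ≤ n + 1 := by
  classical
  refine ⟨Set.toFinite _, ?_⟩
  set a : Fin n → ℝ := fun i => ∑ j ∈ Finset.univ.filter (· < i), x j with ha
  set b : Fin n → ℝ := fun i => ∑ j ∈ Finset.univ.filter (· ≤ i), x j with hb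
  set S : ℝ → Set (Fin n) := fun h =>
    {i : Fin n | ∃ t : ℕ, t < k ∧ (t : ℝ) + h ∈ Set.Ico (a i) (b i)} with hS
  -- fingerprint function
  set c : Fin (n + 1) → ℝ := fun m =>
    Int.fract (∑ j ∈ Finset.univ.filter (fun j : Fin n => (j : ℕ) < (m : ℕ)), x j) with hc
  set φ : ℝ → Set (Fin (n + 1)) := fun h => {m | c m ≤ h} with hφ
  have hca : ∀ i : Fin n, c i.castSucc = Int.fract (a i) := by
    intro i
    have hfe : (Finset.univ.filter fun j : Fin n => (j : ℕ) < ((i.castSucc : Fin (n+1)) : ℕ))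
        = Finset.univ.filter (· < i) := by
      ext j
      simp only [Finset.mem_filter, Finset.mem_univ, true_and, Fin.coe_castSucc]
      exact (Fin.lt_def).symm
    simp only [hc, ha, hfe]
  have hcb : ∀ i : Fin n, c i.succ = Int.fract (b i) := by
    intro i
    have hfe : (Finset.univ.filter fun j : Fin n => (j : ℕ) < ((i.succ : Fin (n+1)) : ℕ))
        = Finset.univ.filter (· ≤ i) := by
      ext j
      simp only [Finset.mem_filter, Finset.mem_univ, true_and, Fin.val_succ, Nat.lt_succ_iff]
      exact (Fin.le_def).symm
    simp only [hc, hb, hfe]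
  -- S is determined by φ
  have hsub : ∀ h ∈ Set.Ico (0 : ℝ) 1, ∀ h' ∈ Set.Ico (0 : ℝ) 1,
      φ h = φ h' → S h ⊆ S h' := by
    intro h ⟨hh0, hh1⟩ h' ⟨hh'0, hh'1⟩ hpp i ⟨t, ht, h1, h2⟩
    have hcc : ∀ m : Fin (n + 1), c m ≤ h ↔ c m ≤ h' := by
      intro m
      constructor <;> intro hm
      · have : m ∈ φ h := hm
        rw [hpp] at this; exact this
      · have : m ∈ φ h' := hm
        rw [← hpp] at this; exact this
    have := comb_key (a i) (b i) h h' t hh0 hh1 hh'0 hh'1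
      (by rw [← hca i]; exact hcc _) (by rw [← hcb i]; exact hcc _) h1 h2
    exact ⟨t, ht, this.1, this.2⟩
  have key : ∀ h ∈ Set.Ico (0 : ℝ) 1, ∀ h' ∈ Set.Ico (0 : ℝ) 1,
      φ h = φ h' → S h = S h' := fun h hh h' hh' hpp =>
    Set.Subset.antisymm (hsub h hh h' hh' hpp) (hsub h' hh' h hh hpp.symm)
  -- the set in question equals S '' Ico
  have hV : {S' : Set (Fin n) | ∃ h ∈ Set.Ico (0 : ℝ) 1,
      S' = {i : Fin n | ∃ t : ℕ, t < k ∧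
        (t : ℝ) + h ∈ Set.Ico (∑ j ∈ Finset.univ.filter (· < i), x j)
          (∑ j ∈ Finset.univ.filter (· ≤ i), x j)}} = S '' Set.Ico 0 1 := by
    ext v
    simp only [Set.mem_setOf_eq, Set.mem_image]
    constructor
    · rintro ⟨h, hh, rfl⟩; exact ⟨h, hh, rfl⟩
    · rintro ⟨h, hh, rfl⟩; exact ⟨h, hh, rfl⟩
  rw [hV]
  -- choice function g
  set g : Set (Fin (n + 1)) → Set (Fin n) := fun u =>
    if hu : ∃ h ∈ Set.Ico (0 : ℝ) 1, φ h = u then S hu.choose else ∅ with hg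
  have hgφ : ∀ h ∈ Set.Ico (0 : ℝ) 1, g (φ h) = S h := by
    intro h hh
    have hex : ∃ h' ∈ Set.Ico (0 : ℝ) 1, φ h' = φ h := ⟨h, hh, rfl⟩
    rw [hg]
    simp only [dif_pos hex]
    obtain ⟨hmem, heq⟩ := hex.choose_spec
    exact key _ hmem _ hh heq
  have himg : S '' Set.Ico 0 1 = g '' (φ '' Set.Ico 0 1) := by
    rw [← Set.image_comp]
    exact Set.image_congr fun h hh => (hgφ h hh).symm
  rw [himg]
  have hT : (φ '' Set.Ico (0 : ℝ) 1).ncard ≤ n + 1 := by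
    have := Set.ncard_le_ncard_of_injOn (fun u => u.ncard)
      (s := φ '' Set.Ico (0 : ℝ) 1) (t := Set.Icc 1 (n + 1))
      ?_ ?_ (Set.toFinite _)
    · calc (φ '' Set.Ico (0 : ℝ) 1).ncard ≤ (Set.Icc 1 (n + 1)).ncard := this
        _ = n + 1 := by
          rw [← Finset.coe_Icc, Set.ncard_coe_finset, Nat.card_Icc]; omega
    · rintro u ⟨h, hh, rfl⟩
      constructor
      · have h0 : (0 : Fin (n + 1)) ∈ φ h := by
          simp only [hφ, Set.mem_setOf_eq, hc]
          have : Finset.univ.filter (fun j : Fin n => (j : ℕ) < ((0 : Fin (n+1)) : ℕ)) = ∅ := by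
            simp
          rw [this]
          simpa using hh.1
        have hne : (φ h).Nonempty := ⟨0, h0⟩
        exact (Set.ncard_pos (Set.toFinite _)).mpr hne

      · calc (φ h).ncard ≤ (Set.univ : Set (Fin (n + 1))).ncard :=
              Set.ncard_le_ncard (Set.subset_univ _) (Set.toFinite _)
          _ = n + 1 := by rw [Set.ncard_univ]; simp
    · rintro u ⟨h, hh, rfl⟩ v ⟨h', hh', rfl⟩ hcard
      have hmono : ∀ s s' : ℝ, s ≤ s' → φ s ⊆ φ s' := by
        intro s s' hss m hm
        exact le_trans hm hss
      rcases le_total h h' with hle | hle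
      · exact Set.eq_of_subset_of_ncard_le (hmono _ _ hle) (le_of_eq hcard.symm) (Set.toFinite _)
      · exact (Set.eq_of_subset_of_ncard_le (hmono _ _ hle) (le_of_eq hcard) (Set.toFinite _)).symm
  calc (g '' (φ '' Set.Ico (0:ℝ) 1)).ncard ≤ (φ '' Set.Ico (0:ℝ) 1).ncard :=
        Set.ncard_image_le (Set.toFinite _)
    _ ≤ n + 1 := hT
end
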